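/- A fresh atomic value (nonce) that does not occur as a subterm of any message in the adversary's knowledge set cannot be derived by the Dolev-Yao adversary. -/
import Mathlib


abbrev Name := ℕ
abbrev Key := ℕ

/-- Symbolic messages: atoms, pairs and (symmetric/asymmetric) encryption. -/
inductive Msg where
  | atom : Name → Msg
  | pair : Msg → Msg → Msg
  | senc : Msg → Msg → Msg
  | aenc : Msg → Key → Msg
  | pk : Key → Msg
  | sk : Key → Msg
deriving DecidableEq

/-- Dolev-Yao deduction relation. -/
inductive Knows : Set Msg → Msg → Prop where
  | mem {S m} : m ∈ S → Knows S m
  | pair_intro {S m n} : Knows S m → Knows S n → Knows S (Msg.pair m n)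
  | fst {S m n} : Knows S (Msg.pair m n) → Knows S m
  | snd {S m n} : Knows S (Msg.pair m n) → Knows S n
  | senc_intro {S m key} : Knows S m → Knows S key → Knows S (Msg.senc m key)
  | sdec {S m key} : Knows S (Msg.senc m key) → Knows S key → Knows S m
  | aenc_intro {S m k} : Knows S m → Knows S (Msg.pk k) → Knows S (Msg.aenc m k)
  | adec {S m k} : Knows S (Msg.aenc m k) → Knows S (Msg.sk k) → Knows S m

/-- Subterm relation on symbolic messages. -/
inductive Subterm : Msg → Msg → Prop where
  | refl (m) : Subterm m m
  | pair_left {m a b} : Subterm m a → Subterm m (Msg.pair a b)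
  | pair_right {m a b} : Subterm m b → Subterm m (Msg.pair a b)
  | senc_msg {m a key} : Subterm m a → Subterm m (Msg.senc a key)
  | senc_key {m a key} : Subterm m key → Subterm m (Msg.senc a key)
  | aenc {m a k} : Subterm m a → Subterm m (Msg.aenc a k)

/-- **Freshness.** A fresh atomic value (nonce) that does not occur as a subterm of
any message in the adversary's knowledge set cannot be derived by the Dolev-Yao
adversary: the deduction rules cannot introduce new atoms. -/
theorem fresh_atom_underivable (S : Set Msg) (n : Name)
    (hfresh : ∀ x ∈ S, ¬ Subterm (Msg.atom n) x) :
    ¬ Knows S (Msg.atom n) := by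
  have key : ∀ m, Knows S m → Subterm (Msg.atom n) m → False := by
    intro m hk
    induction hk with
    | mem h => intro hs; exact hfresh _ h hs
    | pair_intro _ _ ih1 ih2 =>
        intro hs
        cases hs with
        | pair_left h => exact ih1 h
        | pair_right h => exact ih2 h
    | fst _ ih => intro hs; exact ih (Subterm.pair_left hs)
    | snd _ ih => intro hs; exact ih (Subterm.pair_right hs)
    | senc_intro _ _ ih1 ih2 =>
        intro hs
        cases hs with
        | senc_msg h => exact ih1 h
        | senc_key h => exact ih2 h
    | sdec _ _ ih _ => intro hs; exact ih (Subterm.senc_msg hs)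
    | aenc_intro _ _ ih _ =>
        intro hs
        cases hs with
        | aenc h => exact ih h
    | adec _ _ ih _ => intro hs; exact ih (Subterm.aenc hs)
  intro hk
  exact key _ hk (Subterm.refl _)
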